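/- Let q be a prime with q ≡ 1 (mod 2N), N a power of 2, and ψ a primitive 2N-th root of unity in Z_q with ω = ψ². For polynomials a, b ∈ Z_q[X]/(X^N+1), define â[j] = NTT_ω(ψ^i·a_i)[j] and similarly b̂. Then the polynomial c with coefficients c_i = ψ^{-i}·INTT_ω(â ⊙ b̂)[i] equals a·b in Z_q[X]/(X^N+1), where ⊙ is pointwise multiplication. -/

import Mathlib

open Polynomial Finset

/-- Negacyclic convolution via twisted NTT: with `q ≡ 1 (mod 2N)` prime, `N` a power
of 2, `ψ` a primitive `2N`-th root of unity and `ω = ψ²`, pre-twisting by powers of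
`ψ`, taking pointwise products of NTTs, inverse-transforming and post-twisting by
powers of `ψ⁻¹` computes the product `a·b` in `ℤ_q[X]/(X^N+1)`. -/
theorem stmt11 (q N : ℕ) [Fact q.Prime] (hN : ∃ a : ℕ, N = 2 ^ a) (hN0 : 0 < N)
    (hq : 2 * N ∣ q - 1) (ψ : ZMod q) (hψ : orderOf ψ = 2 * N)
    (a b : Polynomial (ZMod q)) (ha : a.natDegree < N) (hb : b.natDegree < N) :
    (Ideal.Quotient.mk (Ideal.span {(X : Polynomial (ZMod q)) ^ N + 1}))
      (∑ i ∈ range N, C ((ψ⁻¹) ^ i * ((N : ZMod q)⁻¹ *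
        ∑ j ∈ range N,
          ((∑ n ∈ range N, ψ ^ n * a.coeff n * (ψ ^ 2) ^ (n * j)) *
           (∑ n ∈ range N, ψ ^ n * b.coeff n * (ψ ^ 2) ^ (n * j))) *
          ((ψ ^ 2)⁻¹) ^ (i * j))) * X ^ i) =
    (Ideal.Quotient.mk (Ideal.span {(X : Polynomial (ZMod q)) ^ N + 1})) (a * b) := by
  have hq2 : 2 ≤ q := (Fact.out : q.Prime).two_le
  haveI : NeZero q := ⟨by omega⟩
  have h1 : ψ ^ (2 * N) = 1 := by rw [← hψ]; exact pow_orderOf_eq_one ψ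
  have hψ0 : ψ ≠ 0 := by
    intro h; rw [h, zero_pow (by omega)] at h1; exact one_ne_zero h1.symm
  have hψN : ψ ^ N = -1 := by
    have hsq : (ψ ^ N) ^ 2 = 1 := by rw [← pow_mul, Nat.mul_comm]; exact h1
    rcases sq_eq_one_iff.mp hsq with h | h
    · exfalso
      have hd := orderOf_dvd_of_pow_eq_one h
      rw [hψ] at hd
      have := Nat.le_of_dvd hN0 hd; omega
    · exact h
  set ω := ψ ^ 2 with hωdef
  have hω1 : ω ^ N = 1 := by rw [hωdef, ← pow_mul]; exact h1
  have hω0 : ω ≠ 0 := pow_ne_zero _ hψ0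
  have hωord : orderOf ω = N := by
    have hd1 : orderOf ω ∣ N := orderOf_dvd_of_pow_eq_one hω1
    have hd2 : N ∣ orderOf ω := by
      have hpow : ψ ^ (2 * orderOf ω) = 1 := by
        rw [pow_mul]; exact pow_orderOf_eq_one ω
      have hdvd := orderOf_dvd_of_pow_eq_one hpow
      rw [hψ] at hdvd
      exact (Nat.mul_dvd_mul_iff_left (by norm_num : 0 < 2)).mp hdvd
    exact Nat.dvd_antisymm hd1 hd2
  have hωu : IsUnit ω := by
    refine IsUnit.of_mul_eq_one (ω ^ (N - 1)) ?_
    rw [← pow_succ']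
    have hNN : N - 1 + 1 = N := by omega
    rw [hNN, hω1]
  have hωpow : ∀ n i : ℕ, (ω ^ n = ω ^ i ↔ n % N = i % N) := by
    intro n i
    have key : (hωu.unit ^ n = hωu.unit ^ i) ↔ (ω ^ n = ω ^ i) := by
      rw [Units.ext_iff]
      simp [hωu.unit_spec]
    rw [← key, pow_eq_pow_iff_modEq, ← orderOf_units, hωu.unit_spec, hωord]
    rfl
  have hgeom : ∀ r : ZMod q, r ^ N = 1 →
      ∑ j ∈ range N, r ^ j = if r = 1 then (N : ZMod q) else 0 := by
    intro r hr
    split_ifs with h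
    · simp [h]
    · have hg := geom_sum_mul r N
      rw [hr, sub_self] at hg
      rcases mul_eq_zero.mp hg with h' | h'
      · exact h'
      · exact absurd (sub_eq_zero.mp h') h
  have hNlt : N < q := by
    have := Nat.le_of_dvd (by omega) hq; omega
  have hNq : (N : ZMod q) ≠ 0 := by
    rw [Ne, ZMod.natCast_eq_zero_iff]
    intro h; have := Nat.le_of_dvd hN0 h; omega
  -- the antidiagonal sum lemma
  have hdiag : ∀ t : ℕ, ∑ n ∈ range N, ∑ m ∈ range N,
      (ψ ^ n * a.coeff n * (ψ ^ m * b.coeff m)) * (if n + m = t then (N : ZMod q) else 0)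
      = (N : ZMod q) * (ψ ^ t * (a * b).coeff t) := by
    intro t
    have hterm : ∀ n m : ℕ, (ψ ^ n * a.coeff n * (ψ ^ m * b.coeff m)) *
        (if n + m = t then (N : ZMod q) else 0)
        = if n + m = t then (N : ZMod q) * (ψ ^ t * (a.coeff n * b.coeff m)) else 0 := by
      intro n m
      split_ifs with h
      · rw [← h, pow_add]; ring
      · rw [mul_zero]
    simp only [hterm]
    rw [← Finset.sum_product', ← Finset.sum_filter, Polynomial.coeff_mul,
        Finset.mul_sum, Finset.mul_sum]
    refine Finset.sum_subset ?_ ?_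
    · intro p hp
      rw [mem_filter] at hp
      rw [Finset.HasAntidiagonal.mem_antidiagonal]
      exact hp.2
    · intro p hp hnp
      rw [Finset.HasAntidiagonal.mem_antidiagonal] at hp
      have hz : a.coeff p.1 * b.coeff p.2 = 0 := by
        rcases Nat.lt_or_ge p.1 N with h1 | h1
        · rcases Nat.lt_or_ge p.2 N with h2 | h2
          · exact absurd (Finset.mem_filter.mpr
              ⟨Finset.mem_product.mpr ⟨Finset.mem_range.mpr h1, Finset.mem_range.mpr h2⟩, hp⟩) hnp
          · rw [Polynomial.coeff_eq_zero_of_natDegree_lt (lt_of_lt_of_le hb h2), mul_zero]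
        · rw [Polynomial.coeff_eq_zero_of_natDegree_lt (lt_of_lt_of_le ha h1), zero_mul]
      rw [hz, mul_zero, mul_zero]
  -- the per-coefficient computation
  have hc : ∀ i ∈ range N,
      (ψ⁻¹) ^ i * ((N : ZMod q)⁻¹ *
        ∑ j ∈ range N, ((∑ n ∈ range N, ψ ^ n * a.coeff n * ω ^ (n * j)) *
          (∑ n ∈ range N, ψ ^ n * b.coeff n * ω ^ (n * j))) * (ω⁻¹) ^ (i * j))
      = (a * b).coeff i - (a * b).coeff (N + i) := by
    intro i hi
    rw [mem_range] at hi
    have step1 : ∀ j : ℕ, ((∑ n ∈ range N, ψ ^ n * a.coeff n * ω ^ (n * j)) *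
          (∑ n ∈ range N, ψ ^ n * b.coeff n * ω ^ (n * j))) * (ω⁻¹) ^ (i * j)
        = ∑ n ∈ range N, ∑ m ∈ range N,
            (ψ ^ n * a.coeff n * (ψ ^ m * b.coeff m)) * (ω ^ (n + m) * (ω⁻¹) ^ i) ^ j := by
      intro j
      rw [Finset.sum_mul_sum, Finset.sum_mul]
      refine sum_congr rfl fun n _ => ?_
      rw [Finset.sum_mul]
      refine sum_congr rfl fun m _ => ?_
      ring
    have step2 : ∑ j ∈ range N, (((∑ n ∈ range N, ψ ^ n * a.coeff n * ω ^ (n * j)) *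
          (∑ n ∈ range N, ψ ^ n * b.coeff n * ω ^ (n * j))) * (ω⁻¹) ^ (i * j))
        = ∑ n ∈ range N, ∑ m ∈ range N,
            (ψ ^ n * a.coeff n * (ψ ^ m * b.coeff m)) *
              (if ω ^ (n + m) = ω ^ i then (N : ZMod q) else 0) := by
      rw [Finset.sum_congr rfl fun j _ => step1 j, Finset.sum_comm]
      refine sum_congr rfl fun n _ => ?_
      rw [Finset.sum_comm]
      refine sum_congr rfl fun m _ => ?_
      have hinv : (ω⁻¹) ^ N = 1 := by rw [inv_pow, hω1, inv_one]
      have hr : (ω ^ (n + m) * (ω⁻¹) ^ i) ^ N = 1 := by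
        calc (ω ^ (n + m) * (ω⁻¹) ^ i) ^ N = (ω ^ N) ^ (n + m) * ((ω⁻¹) ^ N) ^ i := by ring
          _ = 1 := by rw [hω1, hinv, one_pow, one_pow, one_mul]
      rw [← Finset.mul_sum, hgeom _ hr]
      congr 1
      simp only [inv_pow, mul_inv_eq_one₀ (pow_ne_zero i hω0)]
    have hcond : ∀ n < N, ∀ m < N,
        (ω ^ (n + m) = ω ^ i ↔ (n + m = i ∨ n + m = i + N)) := by
      intro n hn m hm
      rw [hωpow]
      constructor
      · intro h
        rcases Nat.lt_or_ge (n + m) N with h' | h'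
        · left; rw [Nat.mod_eq_of_lt h', Nat.mod_eq_of_lt hi] at h; omega
        · right
          rw [Nat.mod_eq_sub_mod h', Nat.mod_eq_of_lt (by omega), Nat.mod_eq_of_lt hi] at h
          omega
      · rintro (h | h)
        · rw [h]
        · rw [h, Nat.add_mod_right]
    have step3 : ∑ n ∈ range N, ∑ m ∈ range N,
        (ψ ^ n * a.coeff n * (ψ ^ m * b.coeff m)) *
          (if ω ^ (n + m) = ω ^ i then (N : ZMod q) else 0)
        = (N : ZMod q) * (ψ ^ i * (a * b).coeff i)
          + (N : ZMod q) * (ψ ^ (i + N) * (a * b).coeff (i + N)) := by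
      have hsplit : ∀ n ∈ range N, ∀ m ∈ range N,
          (ψ ^ n * a.coeff n * (ψ ^ m * b.coeff m)) *
            (if ω ^ (n + m) = ω ^ i then (N : ZMod q) else 0)
          = (ψ ^ n * a.coeff n * (ψ ^ m * b.coeff m)) *
              (if n + m = i then (N : ZMod q) else 0)
            + (ψ ^ n * a.coeff n * (ψ ^ m * b.coeff m)) *
              (if n + m = i + N then (N : ZMod q) else 0) := by
        intro n hn m hm
        rw [mem_range] at hn hm
        simp only [hcond n hn m hm]
        by_cases hP : n + m = i
        · have hQ : ¬ n + m = i + N := by omega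
          rw [if_pos (Or.inl hP), if_pos hP, if_neg hQ, mul_zero, add_zero]
        · by_cases hQ : n + m = i + N
          · rw [if_pos (Or.inr hQ), if_neg hP, if_pos hQ, mul_zero, zero_add]
          · rw [if_neg (by tauto), if_neg hP, if_neg hQ, mul_zero, add_zero]
      rw [Finset.sum_congr rfl fun n hn => Finset.sum_congr rfl fun m hm => hsplit n hn m hm]
      simp only [Finset.sum_add_distrib]
      rw [hdiag i, hdiag (i + N)]
    rw [step2, step3, pow_add ψ i N, hψN, Nat.add_comm N i]
    have hψi : (ψ : ZMod q) ^ i ≠ 0 := pow_ne_zero _ hψ0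
    rw [inv_pow]
    field_simp
    ring
  rw [Finset.sum_congr rfl (fun i hi => by rw [hc i hi])]
  rw [Ideal.Quotient.eq, Ideal.mem_span_singleton]
  refine ⟨-(∑ i ∈ range N, C ((a * b).coeff (N + i)) * X ^ i), ?_⟩
  have hdeg : (a * b).natDegree < N + N :=
    lt_of_le_of_lt (natDegree_mul_le) (by omega)
  have hab2 : a * b = (∑ i ∈ range N, C ((a * b).coeff i) * X ^ i)
      + X ^ N * ∑ i ∈ range N, C ((a * b).coeff (N + i)) * X ^ i := by
    conv_lhs => rw [Polynomial.as_sum_range' (a * b) (N + N) hdeg]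
    rw [Finset.sum_range_add, Finset.mul_sum]
    congr 1
    · exact Finset.sum_congr rfl fun i _ => (C_mul_X_pow_eq_monomial).symm
    · refine Finset.sum_congr rfl fun i _ => ?_
      rw [← C_mul_X_pow_eq_monomial, pow_add]; ring
  calc (∑ i ∈ range N, C ((a * b).coeff i - (a * b).coeff (N + i)) * X ^ i) - a * b
      = ((∑ i ∈ range N, C ((a * b).coeff i) * X ^ i)
          - ∑ i ∈ range N, C ((a * b).coeff (N + i)) * X ^ i)
        - ((∑ i ∈ range N, C ((a * b).coeff i) * X ^ i)
          + X ^ N * ∑ i ∈ range N, C ((a * b).coeff (N + i)) * X ^ i) := by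
        rw [← hab2]
        congr 1
        simp only [C_sub, sub_mul, Finset.sum_sub_distrib]
      _ = (X ^ N + 1) * (-(∑ i ∈ range N, C ((a * b).coeff (N + i)) * X ^ i)) := by ring
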